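/- There is no linear MDS code of dimension 3 and length q + 2 over F_q when q is an odd prime power; i.e., L_q(3) ≤ q + 1 for odd prime powers q. -/

import Mathlib

open Module Submodule Finset

section Arc

variable {q : ℕ} {F : Type} [Field F] [Fintype F] [DecidableEq F]

/-- extract independence of the first two vectors of an independent triple -/
lemma li_pair_of_triple {x y z : Fin 3 → F} (h : LinearIndependent F ![x, y, z]) :
    LinearIndependent F ![x, y] := by
  have : ![x, y] = ![x, y, z] ∘ (![0, 1] : Fin 2 → Fin 3) := by
    funext m; fin_cases m <;> rfl
  rw [this]
  exact h.comp _ (by decide)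

lemma exists_partner (hF : Fintype.card F = q)
    (v : Fin (q + 2) → (Fin 3 → F))
    (harc : ∀ i j k : Fin (q + 2), i ≠ j → i ≠ k → j ≠ k →
      LinearIndependent F ![v i, v j, v k])
    (u : Fin 3 → F) (hu : ∀ i, u ∉ span F {v i}) (i : Fin (q + 2)) :
    ∃ j, j ≠ i ∧ v j ∈ span F {u, v i} := by
  have hq1 : 1 ≤ q := hF ▸ Fintype.card_pos
  by_contra hcon
  push_neg at hcon
  -- hcon : ∀ j ≠ i, v j ∉ span F {u, v i}
  obtain ⟨j0, hj0⟩ : ∃ j0, j0 ≠ i := Fintype.exists_ne_of_one_lt_card (by simp) i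
  -- the pair (v i, v j0) is independent
  obtain ⟨k0, hk0⟩ : ∃ k0, k0 ∉ ({i, j0} : Finset (Fin (q + 2))) := by
    have : (univ \ ({i, j0} : Finset (Fin (q + 2)))).Nonempty := by
      rw [← Finset.card_pos, Finset.card_sdiff_of_subset (Finset.subset_univ _)]
      have h2 : ({i, j0} : Finset (Fin (q + 2))).card ≤ 2 := Finset.card_insert_le _ _ |>.trans (by simp)
      simp only [Finset.card_univ, Fintype.card_fin]
      omega
    obtain ⟨k0, hk0⟩ := this
    exact ⟨k0, (Finset.mem_sdiff.mp hk0).2⟩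
  simp only [Finset.mem_insert, Finset.mem_singleton, not_or] at hk0
  have hpair : LinearIndependent F ![v i, v j0] :=
    li_pair_of_triple (harc i j0 k0 hj0.symm (Ne.symm hk0.1) (Ne.symm hk0.2))
  -- u ∉ span {v i, v j0}
  have huij : u ∉ span F {v i, v j0} := by
    intro hmem
    rw [Submodule.mem_span_pair] at hmem
    obtain ⟨a, b, hab⟩ := hmem
    by_cases hb : b = 0
    · apply hu i
      rw [Submodule.mem_span_singleton]
      exact ⟨a, by rw [← hab, hb, zero_smul, add_zero]⟩
    · apply hcon j0 hj0
      rw [Submodule.mem_span_pair]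
      refine ⟨b⁻¹, -(b⁻¹ * a), ?_⟩
      rw [← hab]
      match_scalars <;> field_simp <;> ring
  -- basis (u, v i, v j0)
  have htriple : LinearIndependent F (Fin.cons u ![v i, v j0] : Fin 3 → (Fin 3 → F)) := by
    rw [linearIndependent_fin_cons]
    refine ⟨hpair, ?_⟩
    have : Set.range ![v i, v j0] = {v i, v j0} := by
      ext x
      simp only [Set.mem_range, Set.mem_insert_iff, Set.mem_singleton_iff, Fin.exists_fin_two]
      constructor
      · rintro (rfl | rfl) <;> simp
      · rintro (rfl | rfl) <;> simp
    rwa [this]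
  have hcard3 : Fintype.card (Fin 3) = finrank F (Fin 3 → F) := by simp
  let B := basisOfLinearIndependentOfCardEqFinrank htriple hcard3
  have hB : ⇑B = Fin.cons u ![v i, v j0] :=
    coe_basisOfLinearIndependentOfCardEqFinrank htriple hcard3
  have hB0 : B 0 = u := by rw [hB]; rfl
  have hB1 : B 1 = v i := by rw [hB]; rfl
  have hB2 : B 2 = v j0 := by rw [hB]; rfl
  -- membership in span {u, v i} iff third coordinate vanishes
  have hspan_iff : ∀ x : Fin 3 → F, x ∈ span F {u, v i} ↔ B.repr x 2 = 0 := by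
    intro x
    constructor
    · intro hx
      rw [Submodule.mem_span_pair] at hx
      obtain ⟨a, b, hab⟩ := hx
      have : B.repr x = a • B.repr u + b • B.repr (v i) := by
        rw [← map_smul, ← map_smul, ← map_add, hab]
      rw [this, ← hB0, ← hB1, B.repr_self, B.repr_self]
      simp
    · intro hx
      have hsum := B.sum_repr x
      rw [Fin.sum_univ_three, hB0, hB1, hB2, hx, zero_smul, add_zero] at hsum
      rw [Submodule.mem_span_pair]
      exact ⟨B.repr x 0, B.repr x 1, hsum⟩
  -- first coordinate nonzero for j ∉ {i, j0}
  have ha_ne : ∀ j, j ≠ i → j ≠ j0 → B.repr (v j) 0 ≠ 0 := by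
    intro j hji hjj0 h0
    have hsum := B.sum_repr (v j)
    rw [Fin.sum_univ_three, hB0, hB1, hB2, h0, zero_smul, zero_add] at hsum
    have := harc i j0 j hj0.symm (Ne.symm hji) (Ne.symm hjj0)
    rw [Fintype.linearIndependent_iff] at this
    have hrel : ∑ m : Fin 3, (![B.repr (v j) 1, B.repr (v j) 2, -1] m) • (![v i, v j0, v j] m) = 0 := by
      rw [Fin.sum_univ_three]
      simp only [Matrix.cons_val_zero, Matrix.cons_val_one, Matrix.head_cons,
        Matrix.cons_val_two, Matrix.tail_cons]
      rw [neg_smul, one_smul]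
      linear_combination (norm := module) hsum
    have := this _ hrel 2
    simp at this
  -- third coordinate nonzero for j ≠ i
  have hc_ne : ∀ j, j ≠ i → B.repr (v j) 2 ≠ 0 := by
    intro j hji h0
    exact hcon j hji ((hspan_iff (v j)).mpr h0)
  -- injective map into F \ {0}
  set S : Finset (Fin (q + 2)) := (univ.erase j0).erase i with hS
  have hScard : S.card = q := by
    rw [hS, Finset.card_erase_of_mem (Finset.mem_erase.mpr ⟨Ne.symm hj0, Finset.mem_univ i⟩),
      Finset.card_erase_of_mem (Finset.mem_univ j0)]
    simp
  set r : Fin (q + 2) → F := fun j => (B.repr (v j) 0)⁻¹ * B.repr (v j) 2 with hr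
  have hmaps : ∀ j ∈ S, r j ∈ univ.erase (0 : F) := by
    intro j hj
    rw [hS, Finset.mem_erase, Finset.mem_erase] at hj
    obtain ⟨hji, hjj0, -⟩ := hj
    rw [Finset.mem_erase]
    refine ⟨?_, Finset.mem_univ _⟩
    exact mul_ne_zero (inv_ne_zero (ha_ne j hji hjj0)) (hc_ne j hji)
  have hinj : ∀ j ∈ S, ∀ k ∈ S, r j = r k → j = k := by
    intro j hj k hk hreq
    by_contra hjk
    rw [hS, Finset.mem_erase, Finset.mem_erase] at hj hk
    obtain ⟨hji, hjj0, -⟩ := hj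
    obtain ⟨hki, hkj0, -⟩ := hk
    set aj := B.repr (v j) 0
    set ak := B.repr (v k) 0
    set cj := B.repr (v j) 2
    set ck := B.repr (v k) 2
    have haj : aj ≠ 0 := ha_ne j hji hjj0
    have hak : ak ≠ 0 := ha_ne k hki hkj0
    have hcross : ak * cj = aj * ck := by
      rw [hr] at hreq
      have hreq' : aj⁻¹ * cj = ak⁻¹ * ck := hreq
      field_simp at hreq'
      linear_combination hreq'
    -- x := ak • v j - aj • v k is a multiple of v i
    set x : Fin 3 → F := ak • v j - aj • v k with hx
    have hx0 : B.repr x 0 = 0 := by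
      rw [hx, map_sub, map_smul, map_smul]
      simp only [Finsupp.coe_sub, Finsupp.coe_smul, Pi.sub_apply, Pi.smul_apply, smul_eq_mul]
      ring
    have hx2 : B.repr x 2 = 0 := by
      rw [hx, map_sub, map_smul, map_smul]
      simp only [Finsupp.coe_sub, Finsupp.coe_smul, Pi.sub_apply, Pi.smul_apply, smul_eq_mul]
      rw [← hcross]; ring
    have hsum := B.sum_repr x
    rw [Fin.sum_univ_three, hB0, hB1, hB2, hx0, hx2, zero_smul, zero_smul, zero_add, add_zero] at hsum
    have := harc i j k hji.symm hki.symm hjk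
    rw [Fintype.linearIndependent_iff] at this
    have hrel : ∑ m : Fin 3, (![-(B.repr x 1), ak, -aj] m) • (![v i, v j, v k] m) = 0 := by
      rw [Fin.sum_univ_three]
      simp only [Matrix.cons_val_zero, Matrix.cons_val_one, Matrix.head_cons,
        Matrix.cons_val_two, Matrix.tail_cons]
      rw [neg_smul, neg_smul]
      have : x = B.repr x 1 • v i := hsum.symm
      rw [hx] at this
      linear_combination (norm := module) this
    have := this _ hrel 1
    simp at this
    exact hak this
  have hle := Finset.card_le_card_of_injOn r hmaps hinj
  rw [hScard, Finset.card_erase_of_mem (Finset.mem_univ _), Finset.card_univ, hF] at hle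
  omega

lemma partner_unique
    (v : Fin (q + 2) → (Fin 3 → F))
    (harc : ∀ i j k : Fin (q + 2), i ≠ j → i ≠ k → j ≠ k →
      LinearIndependent F ![v i, v j, v k])
    (u : Fin 3 → F) (i j k : Fin (q + 2)) (hj : j ≠ i) (hk : k ≠ i)
    (hjm : v j ∈ span F {u, v i}) (hkm : v k ∈ span F {u, v i}) : j = k := by
  by_contra hjk
  have hli := harc i j k hj.symm hk.symm hjk
  set P : Submodule F (Fin 3 → F) := span F {u, v i} with hP
  have hvi : v i ∈ P := subset_span (by simp)
  have hfr : finrank F P ≤ 2 := by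
    refine (finrank_span_le_card ({u, v i} : Set (Fin 3 → F))).trans ?_
    rw [Set.toFinset_insert, Set.toFinset_singleton]
    exact (Finset.card_insert_le _ _).trans (by simp)
  set w : Fin 3 → P := fun m => ⟨![v i, v j, v k] m, by
    fin_cases m <;> simpa using by first | exact hvi | exact hjm | exact hkm⟩ with hw
  have hliw : LinearIndependent F w := by
    apply LinearIndependent.of_comp P.subtype
    convert hli
    funext m; rfl
  have := hliw.fintype_card_le_finrank
  simp only [Fintype.card_fin] at this
  omega

lemma arc_false (hF : Fintype.card F = q) (hodd : Odd q)
    (v : Fin (q + 2) → (Fin 3 → F))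
    (harc : ∀ i j k : Fin (q + 2), i ≠ j → i ≠ k → j ≠ k →
      LinearIndependent F ![v i, v j, v k]) : False := by
  have hq2 : 2 ≤ q := by
    have := Fintype.one_lt_card (α := F)
    omega
  have hq3 : 3 ≤ q := by
    rcases hodd with ⟨m, rfl⟩; omega
  -- each v i is nonzero
  have hvne : ∀ i, v i ≠ 0 := by
    intro i
    obtain ⟨j, hj⟩ : ∃ j, j ≠ i := Fintype.exists_ne_of_one_lt_card (by simp) i
    obtain ⟨k, hk⟩ : ∃ k, k ∉ ({i, j} : Finset (Fin (q + 2))) := by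
      have : (univ \ ({i, j} : Finset (Fin (q + 2)))).Nonempty := by
        rw [← Finset.card_pos, Finset.card_sdiff_of_subset (Finset.subset_univ _)]
        have h2 : ({i, j} : Finset (Fin (q + 2))).card ≤ 2 :=
          Finset.card_insert_le _ _ |>.trans (by simp)
        simp only [Finset.card_univ, Fintype.card_fin]
        omega
      obtain ⟨k, hk⟩ := this
      exact ⟨k, (Finset.mem_sdiff.mp hk).2⟩
    simp only [Finset.mem_insert, Finset.mem_singleton, not_or] at hk
    exact (harc i j k hj.symm (Ne.symm hk.1) (Ne.symm hk.2)).ne_zero 0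
  -- existence of an external point
  obtain ⟨u, hu⟩ : ∃ u : Fin 3 → F, ∀ i, u ∉ span F {v i} := by
    by_contra hcon
    push_neg at hcon
    have hmem : ∀ u : Fin 3 → F, ∃ p : Fin (q + 2) × F, u = p.2 • v p.1 := by
      intro u
      obtain ⟨i, hi⟩ := hcon u
      rw [Submodule.mem_span_singleton] at hi
      obtain ⟨c, hc⟩ := hi
      exact ⟨(i, c), hc.symm⟩
    choose p hp using hmem
    have hpinj : Function.Injective p := by
      intro u1 u2 h
      rw [hp u1, hp u2, h]
    have hcard := Fintype.card_le_of_injective p hpinj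
    rw [Fintype.card_prod, Fintype.card_fin, Fintype.card_fun, hF, Fintype.card_fin] at hcard
    have hqube : q ^ 3 = q * (q * q) := by ring
    rw [hqube] at hcard
    have h1 : 3 * (q * q) ≤ q * (q * q) := Nat.mul_le_mul_right _ hq3
    have h2 : 3 * q ≤ q * q := Nat.mul_le_mul_right _ hq3
    nlinarith [h1, h2, hcard]
  -- the partner map
  have hex : ∀ i, ∃ j, j ≠ i ∧ v j ∈ span F {u, v i} :=
    exists_partner hF v harc u hu
  choose f hfne hfmem using hex
  -- f is an involution
  have hswap : ∀ i, v i ∈ span F {u, v (f i)} := by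
    intro i
    have := hfmem i
    rw [Submodule.mem_span_pair] at this
    obtain ⟨s, t, hst⟩ := this
    have ht : t ≠ 0 := by
      intro ht0
      rw [ht0, zero_smul, add_zero] at hst
      by_cases hs : s = 0
      · exact hvne (f i) (by rw [← hst, hs, zero_smul])
      · apply hu (f i)
        rw [Submodule.mem_span_singleton]
        exact ⟨s⁻¹, by rw [← hst, smul_smul, inv_mul_cancel₀ hs, one_smul]⟩
    rw [Submodule.mem_span_pair]
    refine ⟨-(t⁻¹ * s), t⁻¹, ?_⟩
    rw [← hst]
    match_scalars <;> field_simp <;> ring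
  have hff : ∀ i, f (f i) = i := by
    intro i
    exact partner_unique v harc u (f i) (f (f i)) i (hfne (f i)) (Ne.symm (hfne i)) (hfmem (f i)) (hswap i)
  -- parity argument
  have h2 : Fact (Nat.Prime 2) := ⟨Nat.prime_two⟩
  let fe : Function.End (Fin (q + 2)) := f
  have hpow : fe ^ 2 ^ 1 = 1 := by
    have h21 : (2 : ℕ) ^ 1 = 2 := by norm_num
    rw [h21, sq]
    funext x
    show f (f x) = x
    exact hff x
  have hmod := Equiv.Perm.card_fixedPoints_modEq (f := fe) hpow
  have hfix : Fintype.card ↑(Function.fixedPoints fe) = 0 := by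
    rw [Fintype.card_eq_zero_iff]
    constructor
    intro ⟨x, hx⟩
    exact hfne x hx
  rw [hfix, Fintype.card_fin] at hmod
  have : (q + 2) % 2 = 0 % 2 := hmod
  rcases hodd with ⟨m, rfl⟩
  omega

end Arc

/-- There is no linear MDS code of dimension 3 and length `q + 2` over a finite
field with `q` elements when `q` is odd: i.e. no 3-dimensional subspace of
`F_q^(q+2)` with minimum Hamming weight `q + 2 - 3 + 1 = q`. -/
theorem no_linear_mds_q_plus_two (q : ℕ) (F : Type) [Field F] [Fintype F]
    [DecidableEq F] (hF : Fintype.card F = q) (hodd : Odd q)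
    (L : Submodule F (Fin (q + 2) → F))
    (hdim : Module.finrank F L = 3)
    (hlow : ∀ w ∈ L, w ≠ 0 → q ≤ hammingNorm w)
    (hattain : ∃ w ∈ L, w ≠ 0 ∧ hammingNorm w = q) :
    False := by
  classical
  have hFD : FiniteDimensional F L := inferInstance
  let b : Basis (Fin 3) F L := Module.finBasisOfFinrankEq F L hdim
  let v : Fin (q + 2) → (Fin 3 → F) := fun i m => (b m : Fin (q + 2) → F) i
  apply arc_false hF hodd v
  intro i j k hij hik hjk
  set idx : Fin 3 → Fin (q + 2) := ![i, j, k] with hidx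
  let T : L →ₗ[F] (Fin 3 → F) :=
    LinearMap.pi (fun m => (LinearMap.proj (idx m)).comp L.subtype)
  have hTval : ∀ (w : L) (m : Fin 3), T w m = (w : Fin (q + 2) → F) (idx m) := by
    intro w m; rfl
  have hTinj : Function.Injective T := by
    rw [injective_iff_map_eq_zero']
    intro w
    constructor
    · intro hw
      by_contra hw0
      have hwval : (w : Fin (q + 2) → F) ≠ 0 := by
        intro h
        exact hw0 (Subtype.coe_injective (by simpa using h))
      have hlow' := hlow (w : Fin (q + 2) → F) w.2 hwval
      have hzero : ∀ m : Fin 3, (w : Fin (q + 2) → F) (idx m) = 0 := by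
        intro m
        rw [← hTval]
        exact congrFun hw m
      have hcard3 : ({i, j, k} : Finset (Fin (q + 2))).card = 3 :=
        Finset.card_eq_three.mpr ⟨i, j, k, hij, hik, hjk, rfl⟩
      have hle : hammingNorm (w : Fin (q + 2) → F) ≤
          (univ \ ({i, j, k} : Finset (Fin (q + 2)))).card := by
        apply Finset.card_le_card
        intro l hl
        rw [Finset.mem_filter] at hl
        rw [Finset.mem_sdiff]
        refine ⟨Finset.mem_univ _, ?_⟩
        intro hmem
        apply hl.2
        simp only [Finset.mem_insert, Finset.mem_singleton] at hmem
        rcases hmem with rfl | rfl | rfl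
        · exact hzero 0
        · exact hzero 1
        · exact hzero 2
      rw [Finset.card_sdiff_of_subset (Finset.subset_univ _), hcard3, Finset.card_univ,
        Fintype.card_fin] at hle
      omega
    · intro hw; rw [hw, map_zero]
  have hTsurj : Function.Surjective T :=
    (LinearMap.injective_iff_surjective_of_finrank_eq_finrank
      (by rw [hdim]; simp)).mp hTinj
  have hmat : ![v i, v j, v k] = fun m s => T (b s) m := by
    funext m s
    rw [hTval]
    fin_cases m <;> rfl
  rw [Fintype.linearIndependent_iff]
  intro g hg m
  let ll : (Fin 3 → F) →ₗ[F] F := ∑ m', g m' • LinearMap.proj m'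
  have hllval : ∀ x : Fin 3 → F, ll x = ∑ m', g m' * x m' := by
    intro x
    simp [ll, LinearMap.sum_apply]
  have hcomp : ll.comp T = 0 := by
    apply b.ext
    intro s
    rw [LinearMap.comp_apply, LinearMap.zero_apply, hllval]
    have hgs := congrFun hg s
    rw [hmat] at hgs
    simpa using hgs
  obtain ⟨w, hwm⟩ := hTsurj (Pi.single m 1)
  have h0 : ll (T w) = 0 := by rw [← LinearMap.comp_apply, hcomp]; rfl
  rw [hwm, hllval] at h0
  simpa [Pi.single_apply] using h0
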